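/- Let f(x) be a monic polynomial of degree at least 1 over Z/4Z such that its reduction modulo 2 has no multiple roots (is squarefree). Then f(x) = f_1(x)···f_r(x) where the f_i are pairwise coprime monic basic irreducible polynomials over Z/4Z, and this factorization is unique up to rearrangement. -/

import Mathlib

open Polynomial

instance : Nontrivial (ZMod 4) := ⟨0, 1, by decide⟩

/-- Reduction mod 2 on coefficients, `ℤ/4 → ℤ/2`. -/
noncomputable def red2 : ZMod 4 →+* ZMod 2 := ZMod.castHom (show (2:ℕ) ∣ 4 by norm_num) (ZMod 2)

lemma red2_surj : Function.Surjective red2 := by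
  intro x; fin_cases x
  · exact ⟨0, map_zero red2⟩
  · exact ⟨1, map_one red2⟩

lemma map_red2_surj : Function.Surjective (Polynomial.map red2) :=
  Polynomial.map_surjective red2 red2_surj

/-- every poly over ZMod 2 has a lift with equal degree -/
lemma exists_lift (g : Polynomial (ZMod 2)) :
    ∃ G : Polynomial (ZMod 4), G.map red2 = g ∧ G.degree = g.degree := by
  have h : g ∈ Polynomial.lifts red2 := by
    rw [Polynomial.mem_lifts]; exact map_red2_surj g
  obtain ⟨G, h1, h2⟩ := Polynomial.mem_lifts_and_degree_eq h
  exact ⟨G, h1, h2⟩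

lemma exists_lift_monic {g : Polynomial (ZMod 2)} (hg : g.Monic) :
    ∃ G : Polynomial (ZMod 4), G.map red2 = g ∧ G.degree = g.degree ∧ G.Monic := by
  have h : g ∈ Polynomial.lifts red2 := by
    rw [Polynomial.mem_lifts]; exact map_red2_surj g
  exact Polynomial.lifts_and_degree_eq_and_monic h hg

lemma two_mul_eq_of_red2_eq {x y : ZMod 4} (h : red2 x = red2 y) : 2 * x = 2 * y := by
  revert h; revert x y; decide

lemma two_mul_poly_eq {P Q : Polynomial (ZMod 4)} (h : P.map red2 = Q.map red2) :
    2 * P = 2 * Q := by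
  ext n
  have := congrArg (fun r => r.coeff n) h
  simp only [Polynomial.coeff_map] at this
  have h2 : (2 : Polynomial (ZMod 4)) = C 2 := by
    rw [map_ofNat]
  rw [h2, Polynomial.coeff_C_mul, Polynomial.coeff_C_mul]
  exact two_mul_eq_of_red2_eq this

noncomputable def half4 : ZMod 4 → ZMod 4 := fun a => if a = 2 then 1 else 0

lemma half4_spec : ∀ a : ZMod 4, red2 a = 0 → 2 * half4 a = a := by decide

lemma exists_half {d : Polynomial (ZMod 4)} (hd : d.map red2 = 0) :
    ∃ e : Polynomial (ZMod 4), d = 2 * e ∧ e.degree ≤ d.degree := by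
  refine ⟨d.sum fun n a => monomial n (half4 a), ?_, ?_⟩
  · rw [Polynomial.sum_def, Finset.mul_sum]
    conv_lhs => rw [← Polynomial.sum_monomial_eq d, Polynomial.sum_def]
    apply Finset.sum_congr rfl
    intro n hn
    have hc : red2 (d.coeff n) = 0 := by
      have := congrArg (fun r => r.coeff n) hd
      simpa [Polynomial.coeff_map] using this
    rw [show (2 : Polynomial (ZMod 4)) = C 2 from (map_ofNat Polynomial.C 2).symm,
      Polynomial.C_mul_monomial, half4_spec _ hc]
  · rw [Polynomial.sum_def]
    refine (Polynomial.degree_sum_le _ _).trans ?_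
    apply Finset.sup_le
    intro n hn
    exact (Polynomial.degree_monomial_le n _).trans (Polynomial.le_degree_of_mem_supp n hn)

/-- coprimality lifts from ZMod 2 to ZMod 4 -/
lemma isCoprime_of_map {p q : Polynomial (ZMod 4)}
    (h : IsCoprime (p.map red2) (q.map red2)) : IsCoprime p q := by
  obtain ⟨a, b, hab⟩ := h
  obtain ⟨A, hA, -⟩ := exists_lift a
  obtain ⟨B, hB, -⟩ := exists_lift b
  have hmap : (A * p + B * q).map red2 = (1 : Polynomial (ZMod 2)) := by
    simp [Polynomial.map_add, Polynomial.map_mul, hA, hB, hab]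
  set w : Polynomial (ZMod 4) := A * p + B * q - 1 with hw
  have hw0 : w.map red2 = 0 := by
    simp [hw, Polynomial.map_sub, hmap]
  obtain ⟨c, hc, -⟩ := exists_half hw0
  have key : A * p + B * q = 1 + 2 * c := by rw [← hc, hw]; ring
  have hunit : (1 + 2 * c) * (1 - 2 * c) = 1 := by
    have h4 : (2 : Polynomial (ZMod 4)) * 2 = 0 := by
      have : (2 : ZMod 4) * 2 = 0 := by decide
      have := congrArg (C (R := ZMod 4)) this
      rwa [Polynomial.C_mul, Polynomial.C_0, show Polynomial.C (2:ZMod 4) = 2 from map_ofNat _ 2] at this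
    calc (1 + 2 * c) * (1 - 2 * c) = 1 - (2 * 2) * (c * c) := by ring
    _ = 1 := by rw [h4]; ring
  exact ⟨(1 - 2*c) * A, (1 - 2*c) * B, by
    calc (1 - 2*c) * A * p + (1 - 2*c) * B * q = (1 - 2*c) * (A * p + B * q) := by ring
    _ = (1 - 2*c) * (1 + 2*c) := by rw [key]
    _ = 1 := by rw [mul_comm]; exact hunit⟩

lemma hensel (f : Polynomial (ZMod 4)) (hf : f.Monic) (g h : Polynomial (ZMod 2))
    (hg : g.Monic) (hh : h.Monic) (hgh : f.map red2 = g * h) (hco : IsCoprime g h)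
    (hdg : 0 < g.degree) (hdh : 0 < h.degree) :
    ∃ G H : Polynomial (ZMod 4), G.Monic ∧ H.Monic ∧ f = G * H ∧
      G.map red2 = g ∧ H.map red2 = h := by
  obtain ⟨G₀, hG₀map, hG₀deg, hG₀m⟩ := exists_lift_monic hg
  obtain ⟨H₀, hH₀map, hH₀deg, hH₀m⟩ := exists_lift_monic hh
  set d : Polynomial (ZMod 4) := f - G₀ * H₀ with hd
  have hdmap : d.map red2 = 0 := by
    rw [hd, Polynomial.map_sub, Polynomial.map_mul, hG₀map, hH₀map, hgh, sub_self]
  obtain ⟨e, hde, hedeg⟩ := exists_half hdmap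
  -- degree of d < degree f
  have hfdeg : f.degree = g.degree + h.degree := by
    rw [← Polynomial.degree_mul, ← hgh, (hf.degree_map red2)]
  have hGH0deg : (G₀ * H₀).degree = f.degree := by
    rw [hH₀m.degree_mul, hG₀deg, hH₀deg, hfdeg]
  have hf0 : f ≠ 0 := hf.ne_zero
  have hddeg : d.degree < f.degree := by
    rw [hd]
    exact Polynomial.degree_sub_lt hGH0deg.symm hf0
      (by rw [hf.leadingCoeff, (hG₀m.mul hH₀m).leadingCoeff])
  set ebar : Polynomial (ZMod 2) := e.map red2 with hebar
  have hebardeg : ebar.degree < g.degree + h.degree := by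
    calc ebar.degree ≤ e.degree := Polynomial.degree_map_le
    _ ≤ d.degree := hedeg
    _ < f.degree := hddeg
    _ = _ := hfdeg
  -- solve u*h + v*g = ebar over ZMod 2 with degree u < degree g
  obtain ⟨a, b, hab⟩ := hco
  have hg0 : g ≠ 0 := hg.ne_zero
  have hbne : g.degree ≠ ⊥ := fun hb => hg.ne_zero (Polynomial.degree_eq_bot.mp hb)
  have hhne : h.degree ≠ ⊥ := fun hb => hh.ne_zero (Polynomial.degree_eq_bot.mp hb)
  have hsumbot : ⊥ < g.degree + h.degree :=
    lt_of_lt_of_le (bot_lt_iff_ne_bot.mpr hbne) (le_add_of_nonneg_right hdh.le)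
  have hsumne : g.degree + h.degree ≠ ⊥ := hsumbot.ne'
  set q : Polynomial (ZMod 2) := (b * ebar) /ₘ g with hq
  set u : Polynomial (ZMod 2) := (b * ebar) %ₘ g with hu
  set v : Polynomial (ZMod 2) := a * ebar + h * q with hv
  have hudeg : u.degree < g.degree := Polynomial.degree_modByMonic_lt _ hg
  have huv : u * h + v * g = ebar := by
    have hdiv : u + g * q = b * ebar := by
      rw [hu, hq]; exact Polynomial.modByMonic_add_div (b * ebar) g
    calc u * h + v * g = (u + g * q) * h + (a * ebar) * g := by rw [hv]; ring
    _ = (b * ebar) * h + (a * ebar) * g := by rw [hdiv]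
    _ = (a * g + b * h) * ebar := by ring
    _ = ebar := by rw [hab, one_mul]
  have hvdeg : v.degree < h.degree := by
    by_cases hv0 : v = 0
    · rw [hv0, Polynomial.degree_zero]
      exact bot_lt_iff_ne_bot.mpr hhne
    · have hvg : v * g = ebar - u * h := by rw [← huv]; ring
      have h1 : (u * h).degree < g.degree + h.degree := by
        by_cases hu0 : u = 0
        · rw [hu0, zero_mul, Polynomial.degree_zero]
          exact bot_lt_iff_ne_bot.mpr hsumne
        · rw [Polynomial.degree_mul]
          exact WithBot.add_lt_add_right hhne hudeg
      have h2 : (v * g).degree < g.degree + h.degree :=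
        hvg ▸ lt_of_le_of_lt (Polynomial.degree_sub_le _ _) (max_lt hebardeg h1)
      rw [Polynomial.degree_mul, add_comm v.degree g.degree] at h2
      exact lt_of_add_lt_add_left h2
  obtain ⟨U, hUmap, hUdeg⟩ := exists_lift u
  obtain ⟨V, hVmap, hVdeg⟩ := exists_lift v
  refine ⟨G₀ + 2 * U, H₀ + 2 * V, ?_, ?_, ?_, ?_, ?_⟩
  · apply hG₀m.add_of_left
    calc (2 * U).degree ≤ U.degree := by
          rw [show (2 : Polynomial (ZMod 4)) * U = (2 : ZMod 4) • U from by
            rw [Polynomial.smul_eq_C_mul, show Polynomial.C (2 : ZMod 4) = 2 from map_ofNat _ 2]]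
          exact Polynomial.degree_smul_le _ _
    _ = u.degree := hUdeg
    _ < g.degree := hudeg
    _ = G₀.degree := hG₀deg.symm
  · apply hH₀m.add_of_left
    calc (2 * V).degree ≤ V.degree := by
          rw [show (2 : Polynomial (ZMod 4)) * V = (2 : ZMod 4) • V from by
            rw [Polynomial.smul_eq_C_mul, show Polynomial.C (2 : ZMod 4) = 2 from map_ofNat _ 2]]
          exact Polynomial.degree_smul_le _ _
    _ = v.degree := hVdeg
    _ < h.degree := hvdeg
    _ = H₀.degree := hH₀deg.symm
  · have h4 : (2 : Polynomial (ZMod 4)) * 2 = 0 := by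
      have h22 : (2 : ZMod 4) * 2 = 0 := by decide
      calc (2 : Polynomial (ZMod 4)) * 2 = C 2 * C 2 := by
            rw [show Polynomial.C (2:ZMod 4) = 2 from map_ofNat _ 2]
      _ = C ((2:ZMod 4) * 2) := (Polynomial.C_mul).symm
      _ = 0 := by rw [h22, Polynomial.C_0]
    have hkey : 2 * (U * H₀ + V * G₀) = 2 * e := by
      apply two_mul_poly_eq
      rw [Polynomial.map_add, Polynomial.map_mul, Polynomial.map_mul, hUmap, hVmap,
        hG₀map, hH₀map, ← hebar, huv]
    calc f = G₀ * H₀ + d := by rw [hd]; ring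
    _ = G₀ * H₀ + 2 * (U * H₀ + V * G₀) := by rw [hde, hkey]
    _ = (G₀ + 2*U) * (H₀ + 2*V) - (2*2) * (U*V) := by ring
    _ = (G₀ + 2*U) * (H₀ + 2*V) := by rw [h4]; ring
  · rw [Polynomial.map_add, Polynomial.map_mul, hG₀map]
    have h20 : (2 : Polynomial (ZMod 4)).map red2 = 0 := by
      rw [Polynomial.map_ofNat, show (2 : Polynomial (ZMod 2)) = C 2 from
        (map_ofNat Polynomial.C 2).symm, show (2 : ZMod 2) = 0 from by decide, Polynomial.C_0]
    rw [h20, zero_mul, add_zero]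
  · rw [Polynomial.map_add, Polynomial.map_mul, hH₀map]
    have h20 : (2 : Polynomial (ZMod 4)).map red2 = 0 := by
      rw [Polynomial.map_ofNat, show (2 : Polynomial (ZMod 2)) = C 2 from
        (map_ofNat Polynomial.C 2).symm, show (2 : ZMod 2) = 0 from by decide, Polynomial.C_0]
    rw [h20, zero_mul, add_zero]

lemma isCoprime_list_prod {k : Polynomial (ZMod 4)} {T : List (Polynomial (ZMod 4))}
    (h : ∀ t ∈ T, IsCoprime k t) : IsCoprime k T.prod := by
  induction T with
  | nil => simpa using isCoprime_one_right
  | cons a T ih =>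
    rw [List.prod_cons]
    exact (h a (List.mem_cons_self)).mul_right (ih fun t ht => h t (List.mem_cons.2 (Or.inr ht)))

lemma uniq (L : List (Polynomial (ZMod 4))) :
    ∀ L' : List (Polynomial (ZMod 4)),
    L.prod = L'.prod →
    (∀ p ∈ L, p.Monic ∧ Irreducible (p.map red2)) →
    (∀ p ∈ L', p.Monic ∧ Irreducible (p.map red2)) →
    L.Pairwise IsCoprime → L'.Pairwise IsCoprime → L.Perm L' := by
  induction L with
  | nil =>
    intro L' hprod hL hL' _ _
    cases L' with
    | nil => exact List.Perm.refl _
    | cons q T =>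
      exfalso
      have hq : q ∣ (q :: T).prod := List.dvd_prod (List.mem_cons_self)
      rw [← hprod, List.prod_nil] at hq
      have hunit : IsUnit q := isUnit_of_dvd_one hq
      have hirr := (hL' q (List.mem_cons_self)).2
      exact hirr.not_isUnit (hunit.map (Polynomial.mapRingHom red2))
  | cons p T ih =>
    intro L' hprod hL hL' hpair hpair'
    have hpm : p.Monic := (hL p (List.mem_cons_self)).1
    have hpirr : Irreducible (p.map red2) := (hL p (List.mem_cons_self)).2
    have hprime : Prime (p.map red2) := hpirr.prime
    -- find q in L' with same reduction
    have hpd : p ∣ L'.prod := hprod ▸ List.dvd_prod (List.mem_cons_self)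
    have hmapd : (p.map red2) ∣ (L'.map (Polynomial.map red2)).prod := by
      have h1 : (p.map red2) ∣ (L'.prod).map red2 := Polynomial.map_dvd _ hpd
      rwa [show (L'.prod).map red2 = (L'.map (Polynomial.map red2)).prod from by
        simpa using map_list_prod (Polynomial.mapRingHom red2) L'] at h1
    obtain ⟨qb, hqbmem, hqbdvd⟩ := (Prime.dvd_prod_iff hprime).1 hmapd
    obtain ⟨q, hqL', rfl⟩ := List.mem_map.1 hqbmem
    have hqm : q.Monic := (hL' q hqL').1
    have hqirr : Irreducible (q.map red2) := (hL' q hqL').2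
    have hassoc : Associated (p.map red2) (q.map red2) :=
      hpirr.associated_of_dvd hqirr hqbdvd
    have hpq : p.map red2 = q.map red2 :=
      Polynomial.eq_of_monic_of_associated (hpm.map _) (hqm.map _) hassoc
    -- q coprime to T.prod
    have hTco : ∀ t ∈ T, IsCoprime q t := by
      intro t ht
      apply isCoprime_of_map
      rw [← hpq]
      exact IsCoprime.map ((List.pairwise_cons.1 hpair).1 t ht) (Polynomial.mapRingHom red2)
    have hqcop : IsCoprime q T.prod := isCoprime_list_prod hTco
    have hqdvd : q ∣ p * T.prod := by
      rw [← List.prod_cons, hprod]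
      exact List.dvd_prod hqL'
    have hqp : q ∣ p := hqcop.dvd_of_dvd_mul_right hqdvd
    obtain ⟨c, hc⟩ := hqp
    have hcm : c.Monic := hqm.of_mul_monic_left (hc ▸ hpm)
    have hdegeq : p.natDegree = q.natDegree := by
      rw [← hpm.natDegree_map red2, ← hqm.natDegree_map red2, hpq]
    have hc0 : c.natDegree = 0 := by
      have h2 : p.natDegree = q.natDegree + c.natDegree := by
        rw [hc, hqm.natDegree_mul hcm]
      omega
    have hc1 : c = 1 := hcm.natDegree_eq_zero.mp hc0
    have hpeq : p = q := by rw [hc, hc1, mul_one]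
    subst hpeq
    -- cancel p
    have hperm' : L'.Perm (p :: L'.erase p) := List.perm_cons_erase hqL'
    have hprod2 : p * T.prod = p * (L'.erase p).prod := by
      rw [← List.prod_cons, hprod, hperm'.prod_eq, List.prod_cons]
    have hTprod : T.prod = (L'.erase p).prod := hpm.isRegular.left hprod2
    have hsub : (L'.erase p).Sublist L' := List.erase_sublist
    have ihperm : T.Perm (L'.erase p) := by
      apply ih (L'.erase p) hTprod
      · intro t ht; exact hL t (List.mem_cons.2 (Or.inr ht))
      · intro t ht; exact hL' t (hsub.mem ht)
      · exact (List.pairwise_cons.1 hpair).2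
      · exact hpair'.sublist hsub
    exact (ihperm.cons p).trans hperm'.symm

lemma exist : ∀ n : ℕ, ∀ f : Polynomial (ZMod 4), f.Monic → f.natDegree = n →
    Squarefree (f.map red2) →
    ∃ L : List (Polynomial (ZMod 4)), f = L.prod ∧
      (∀ p ∈ L, p.Monic ∧ Irreducible (p.map red2)) ∧ L.Pairwise IsCoprime := by
  intro n
  induction n using Nat.strong_induction_on with
  | _ n ih =>
  intro f hf hdeg hsq
  rcases Nat.eq_zero_or_pos n with rfl | hn
  · have hf1 : f = 1 := hf.natDegree_eq_zero.mp hdeg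
    exact ⟨[], by simp [hf1], by simp, List.Pairwise.nil⟩
  · have hfbar_m : (f.map red2).Monic := hf.map _
    have hfbar_deg : (f.map red2).natDegree = n := by rw [hf.natDegree_map]; exact hdeg
    have hnotunit : ¬ IsUnit (f.map red2) := by
      apply Polynomial.not_isUnit_of_natDegree_pos
      rw [hfbar_deg]; exact hn
    obtain ⟨g, hgm, hgirr, hgdvd⟩ := Polynomial.exists_monic_irreducible_factor _ hnotunit
    obtain ⟨h, hfgh⟩ := hgdvd
    have hh_m : h.Monic := hgm.of_mul_monic_left (hfgh ▸ hfbar_m)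
    by_cases hh1 : h.natDegree = 0
    · have hh_one : h = 1 := hh_m.natDegree_eq_zero.mp hh1
      have hfg : f.map red2 = g := by rw [hfgh, hh_one, mul_one]
      refine ⟨[f], by simp, ?_, List.pairwise_singleton _ _⟩
      intro p hp
      rw [List.mem_singleton] at hp
      subst hp
      exact ⟨hf, hfg ▸ hgirr⟩
    · have hco : IsCoprime g h := by
        rw [hgirr.coprime_iff_not_dvd]
        intro hdvd'
        obtain ⟨k, hk⟩ := hdvd'
        have hsqd : g * g ∣ f.map red2 := ⟨k, by rw [hfgh, hk]; ring⟩
        exact hgirr.not_isUnit (hsq g hsqd)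
      have hdg : 0 < g.degree := Polynomial.degree_pos_of_irreducible hgirr
      have hdh : 0 < h.degree :=
        Polynomial.natDegree_pos_iff_degree_pos.mp (Nat.pos_of_ne_zero hh1)
      obtain ⟨G, H, hGm, hHm, hfGH, hGmap, hHmap⟩ := hensel f hf g h hgm hh_m hfgh hco hdg hdh
      have hHdeg : H.natDegree = h.natDegree := by
        rw [← hHm.natDegree_map red2, hHmap]
      have hsplit : n = g.natDegree + h.natDegree := by
        rw [← hfbar_deg, hfgh, hgm.natDegree_mul hh_m]
      have hgpos : 0 < g.natDegree := Polynomial.natDegree_pos_iff_degree_pos.mpr hdg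
      have hHlt : H.natDegree < n := by omega
      have hHsq : Squarefree (H.map red2) := by
        rw [hHmap]
        exact hsq.squarefree_of_dvd ⟨g, by rw [hfgh]; ring⟩
      obtain ⟨LH, hLHprod, hLHmem, hLHpair⟩ := ih H.natDegree hHlt H hHm rfl hHsq
      refine ⟨G :: LH, ?_, ?_, ?_⟩
      · rw [List.prod_cons, ← hLHprod, hfGH]
      · intro p hp
        rcases List.mem_cons.1 hp with rfl | hp'
        · exact ⟨hGm, hGmap ▸ hgirr⟩
        · exact hLHmem p hp'
      · rw [List.pairwise_cons]
        refine ⟨?_, hLHpair⟩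
        intro t ht
        apply isCoprime_of_map
        rw [hGmap]
        have htH : t ∣ H := hLHprod ▸ List.dvd_prod ht
        have htd : (t.map red2) ∣ h := by
          have hmapdvd : (t.map red2) ∣ (H.map red2) := Polynomial.map_dvd _ htH
          rwa [hHmap] at hmapdvd
        exact hco.of_isCoprime_of_dvd_right htd

/-- A monic polynomial of degree ≥ 1 over `ℤ/4` whose mod-2 reduction is squarefree
factors into pairwise coprime monic basic irreducible polynomials, uniquely up to
rearrangement. -/
theorem factorization_basic_irreducible (f : Polynomial (ZMod 4)) (hf : f.Monic)
    (hdeg : 1 ≤ f.natDegree) (hsq : Squarefree (f.map red2)) :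
    ∃ L : List (Polynomial (ZMod 4)),
      f = L.prod ∧
      (∀ p ∈ L, p.Monic ∧ Irreducible (p.map red2)) ∧
      L.Pairwise IsCoprime ∧
      ∀ L' : List (Polynomial (ZMod 4)),
        f = L'.prod → (∀ p ∈ L', p.Monic ∧ Irreducible (p.map red2)) →
        L'.Pairwise IsCoprime → L'.Perm L := by
  obtain ⟨L, hL, hmem, hpair⟩ := exist f.natDegree f hf rfl hsq
  exact ⟨L, hL, hmem, hpair, fun L' h1 h2 h3 =>
    uniq L' L (by rw [← h1, ← hL]) h2 hmem h3 hpair⟩
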